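/- If C > 1 is a real number and p ∈ (0, 1/2) satisfies log p = C · log(1 - p) (equivalently (1-p)^C = p), then (1 - p)² > C · p²; equivalently, 1/p² > C/(1-p)². -/

import Mathlib

open Real Set

/-- For `u > 1`, `2 log u < u - u⁻¹`. -/
lemma aux_two_log_lt (u : ℝ) (hu : 1 < u) : 2 * Real.log u < u - u⁻¹ := by
  set g : ℝ → ℝ := fun x => x - x⁻¹ - 2 * Real.log x with hg
  have hder : ∀ x : ℝ, 0 < x → HasDerivAt g (1 - (-(x^2)⁻¹) - 2 * x⁻¹) x := by
    intro x hx
    exact ((hasDerivAt_id x).sub (hasDerivAt_inv hx.ne')).sub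
      ((Real.hasDerivAt_log hx.ne').const_mul 2)
  have hmono : StrictMonoOn g (Set.Ici 1) := by
    apply strictMonoOn_of_deriv_pos (convex_Ici 1)
    · intro x hx
      have hx0 : (0:ℝ) < x := lt_of_lt_of_le one_pos hx
      exact (hder x hx0).continuousAt.continuousWithinAt
    · intro x hx
      rw [interior_Ici] at hx
      have hx1 : (1:ℝ) < x := hx
      have hx0 : (0:ℝ) < x := lt_trans one_pos hx1
      rw [(hder x hx0).deriv]
      have h1 : x⁻¹ < 1 := by
        rw [inv_lt_one_iff₀]; right; exact hx1
      have h2 : (x^2)⁻¹ = x⁻¹ * x⁻¹ := by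
        rw [sq, mul_inv]
      have hpos : (0:ℝ) < 1 - x⁻¹ := by linarith
      have h3 : (1 - x⁻¹)^2 > 0 := by positivity
      nlinarith [h3]
  have h1 : g 1 < g u := hmono (by norm_num) (le_of_lt hu) hu
  have hg1 : g 1 = 0 := by simp [hg]
  have : (0:ℝ) < u - u⁻¹ - 2 * Real.log u := by rw [← hg1]; exact h1
  linarith

/-- Tangent line bound at 1/2: `log x ≤ 2x - 1 - log 2`. -/
lemma aux_tangent (x : ℝ) (hx : 0 < x) : Real.log x ≤ 2 * x - 1 - Real.log 2 := by
  have h1 : Real.log (2 * x) ≤ 2 * x - 1 := Real.log_le_sub_one_of_pos (by positivity)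
  have h2 : Real.log (2 * x) = Real.log 2 + Real.log x := Real.log_mul two_ne_zero hx.ne'
  linarith

/-- Derivative of `D x = x² log x - (1-x)² log (1-x)`. -/
lemma aux_hasDerivD (x : ℝ) (hx0 : 0 < x) (hx1 : x < 1) :
    HasDerivAt (fun p : ℝ => p^2 * Real.log p - (1-p)^2 * Real.log (1-p))
      (2*x*Real.log x + x + 2*(1-x)*Real.log (1-x) + (1-x)) x := by
  have hu : HasDerivAt (fun p : ℝ => 1 - p) (-1) x := by
    simpa using (hasDerivAt_id x).const_sub 1
  have h1 : HasDerivAt (fun p : ℝ => p^2) ((2:ℕ) * x ^ 1) x := hasDerivAt_pow 2 x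
  have h2 : HasDerivAt Real.log x⁻¹ x := Real.hasDerivAt_log hx0.ne'
  have h3 := h1.mul h2
  have h4 : HasDerivAt (fun p : ℝ => (1-p)^2) (((2:ℕ) * (1-x) ^ 1) * (-1)) x :=
    (hasDerivAt_pow 2 (1-x)).comp x hu
  have h5 : HasDerivAt (fun p : ℝ => Real.log (1-p)) ((1-x)⁻¹ * (-1)) x :=
    (Real.hasDerivAt_log (by linarith : (1:ℝ) - x ≠ 0)).comp x hu
  have h6 := h4.mul h5
  have h7 := h3.sub h6
  convert h7 using 1
  have hxne : x ≠ 0 := hx0.ne'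
  have h1xne : (1:ℝ) - x ≠ 0 := by intro hc; linarith [hc]
  case e'_4 => rfl
  case e'_5 => rfl
  case e'_8 => rfl
  field_simp
  ring

/-- `D` is strictly decreasing on `[1/3, 1/2]`. -/
lemma aux_antiD :
    StrictAntiOn (fun p : ℝ => p^2 * Real.log p - (1-p)^2 * Real.log (1-p))
      (Set.Icc (1/3 : ℝ) (1/2)) := by
  apply strictAntiOn_of_deriv_neg (convex_Icc _ _)
  · intro x hx
    have hx0 : (0:ℝ) < x := lt_of_lt_of_le (by norm_num) hx.1
    have hx1 : x < 1 := lt_of_le_of_lt hx.2 (by norm_num)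
    exact (aux_hasDerivD x hx0 hx1).continuousAt.continuousWithinAt
  · intro x hx
    rw [interior_Icc] at hx
    have hx0 : (0:ℝ) < x := by linarith [hx.1]
    have hx1 : x < 1 := by linarith [hx.2]
    rw [(aux_hasDerivD x hx0 hx1).deriv]
    have t1 : Real.log x ≤ 2 * x - 1 - Real.log 2 := aux_tangent x hx0
    have t2 : Real.log (1-x) ≤ 2 * (1-x) - 1 - Real.log 2 := aux_tangent (1-x) (by linarith)
    have hl2 : (0.6931471803 : ℝ) < Real.log 2 := Real.log_two_gt_d9
    have m1 : 2*x*Real.log x ≤ 2*x*(2 * x - 1 - Real.log 2) := by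
      apply mul_le_mul_of_nonneg_left t1 (by linarith)
    have m2 : 2*(1-x)*Real.log (1-x) ≤ 2*(1-x)*(2 * (1-x) - 1 - Real.log 2) := by
      apply mul_le_mul_of_nonneg_left t2 (by linarith)
    nlinarith [hx.1, hx.2, sq_nonneg (x - 1/3)]

/-- Key inequality: `(1-p)² log(1-p) < p² log p` on `(0, 1/2)`. -/
lemma aux_key (p : ℝ) (hp0 : 0 < p) (hp2 : p < 1/2) :
    (1-p)^2 * Real.log (1-p) < p^2 * Real.log p := by
  have hq0 : (0:ℝ) < 1 - p := by linarith
  have hlogq : Real.log (1-p) < (1-p) - 1 :=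
    Real.log_lt_sub_one_of_pos hq0 (by intro hc; linarith [hc])
  rcases le_or_gt p (1/3) with hcase | hcase
  · -- small p: use 2 log(1/p) < 1/p - p
    have h1 := aux_two_log_lt p⁻¹ ((one_lt_inv_iff₀).mpr ⟨hp0, by linarith⟩)
    rw [Real.log_inv, inv_inv] at h1
    -- h1 : 2 * (-log p) < p⁻¹ - p
    have h2 : p^2 * (2 * (-Real.log p)) < p^2 * (p⁻¹ - p) :=
      mul_lt_mul_of_pos_left h1 (by positivity)
    have h3 : p^2 * (p⁻¹ - p) = p - p^3 := by
      field_simp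
    rw [h3] at h2
    -- h2 : -2 p² log p < p - p³, so p² log p > (p³ - p)/2
    have h4 : (1-p)^2 * Real.log (1-p) < (1-p)^2 * (-p) := by
      apply mul_lt_mul_of_pos_left _ (by positivity)
      linarith
    nlinarith [h2, h4, hp0, hcase,
      mul_nonneg (mul_nonneg hp0.le hq0.le) (by linarith : (0:ℝ) ≤ 1 - 3*p)]
  · -- p ∈ (1/3, 1/2): D strictly decreasing, D(1/2) = 0
    have hmem1 : p ∈ Set.Icc (1/3 : ℝ) (1/2) := ⟨le_of_lt hcase, le_of_lt hp2⟩
    have hmem2 : (1/2 : ℝ) ∈ Set.Icc (1/3 : ℝ) (1/2) := by norm_num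
    have := aux_antiD hmem1 hmem2 hp2
    simp only at this
    have hD : ((1:ℝ)/2)^2 * Real.log (1/2) - (1-(1:ℝ)/2)^2 * Real.log (1-(1:ℝ)/2) = 0 := by
      norm_num
    linarith [this, hD]

/-- If `C > 1` and `p ∈ (0, 1/2)` satisfies `log p = C log (1 - p)`
(equivalently `(1-p)^C = p`), then `(1 - p)² > C p²`. -/
theorem stmt_4 (C p : ℝ) (hC : 1 < C) (hp0 : 0 < p) (hp2 : p < 1 / 2)
    (h : Real.log p = C * Real.log (1 - p)) :
    C * p ^ 2 < (1 - p) ^ 2 := by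
  have hL : Real.log (1 - p) < 0 := Real.log_neg (by linarith) (by linarith)
  have k := aux_key p hp0 (by linarith)
  rw [h] at k
  nlinarith [k, hL]
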